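/- Consider a Richman game in which Player 1's target v_R is reachable from every vertex and Player 2's target v_S is reachable from no vertex. Then the threshold budget of every vertex is 0: from every vertex and with every strictly positive initial budget, Player 1 has a strategy that forces the outcome to reach v_R; moreover, Player 1 can force the outcome to reach v_R while still holding a strictly positive budget upon arrival. -/

import Mathlib

open scoped Classical

/-! ### Bidding games: the basic model -/

/-- One round of a bidding game: the vertex the token was moved to, the winning bid,
and whether Player 1 won the bidding. -/
structure BidRound (V : Type) where
  dest : V
  bid : ℝ
  p1Won : Bool

/-- A history: the initial vertex together with the list of rounds played so far. -/
structure Hist (V : Type) where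
  init : V
  rounds : List (BidRound V)

/-- The vertex currently occupied by the token. -/
def Hist.cur {V : Type} (h : Hist V) : V :=
  h.rounds.getLast?.elim h.init BidRound.dest

/-- The net payment of Player 1 so far (bids paid upon winning minus bids received). -/
def Hist.pay1 {V : Type} (h : Hist V) : ℝ :=
  (h.rounds.map (fun r => if r.p1Won then r.bid else -r.bid)).sum

/-- The net payment of Player 2 so far. -/
def Hist.pay2 {V : Type} (h : Hist V) : ℝ := -h.pay1

/-- The sum of the weights of all vertices visited so far (including the current one). -/
def Hist.energyAll {V : Type} (w : V → ℤ) (h : Hist V) : ℤ :=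
  w h.init + (h.rounds.map (fun r => w r.dest)).sum

/-- A strategy: maps a history to a bid and the vertex to move to upon winning. -/
def Strat (V : Type) := Hist V → ℝ × V

/-- A tie-breaking mechanism: decides at each history whether Player 1 wins a tie. -/
def TieBreak (V : Type) := Hist V → Bool

/-- A bidding game: a finite directed graph in which every vertex has an outgoing edge. -/
structure BiddingGame (V : Type) [Fintype V] where
  E : V → V → Prop
  total : ∀ v, ∃ u, E v u

/-- One round of play: both players bid; the higher bidder (Player 1 upon a tie won by
the tie-breaking mechanism) pays his bid to the other player and moves the token. -/
noncomputable def extend {V : Type} (tb : TieBreak V) (f1 f2 : Strat V) (h : Hist V) : Hist V :=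
  if (f2 h).1 < (f1 h).1 ∨ ((f1 h).1 = (f2 h).1 ∧ tb h = true) then
    ⟨h.init, h.rounds ++ [⟨(f1 h).2, (f1 h).1, true⟩]⟩
  else
    ⟨h.init, h.rounds ++ [⟨(f2 h).2, (f2 h).1, false⟩]⟩

/-- The history after `n` rounds, starting at `v0`. -/
noncomputable def play {V : Type} (tb : TieBreak V) (f1 f2 : Strat V) (v0 : V) : ℕ → Hist V
  | 0 => ⟨v0, []⟩
  | n + 1 => extend tb f1 f2 (play tb f1 f2 v0 n)

/-- The vertex occupied after `n` rounds. -/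
noncomputable def visit {V : Type} (tb : TieBreak V) (f1 f2 : Strat V) (v0 : V) (n : ℕ) : V :=
  (play tb f1 f2 v0 n).cur

/-- The energy (sum of weights) of the prefix of length `n` of the outcome. -/
noncomputable def energy {V : Type} (w : V → ℤ) (tb : TieBreak V) (f1 f2 : Strat V) (v0 : V)
    (n : ℕ) : ℤ :=
  ∑ i ∈ Finset.range n, w (visit tb f1 f2 v0 i)

/-- Player 1's strategy is legal w.r.t. the initial budget `B`: along any play, his bids
are nonnegative, never exceed his current budget, and his moves follow edges. -/
def Legal1 {V : Type} [Fintype V] (G : BiddingGame V) (f1 : Strat V) (B : ℝ) : Prop :=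
  ∀ (tb : TieBreak V) (f2 : Strat V) (v0 : V) (n : ℕ),
    0 ≤ (f1 (play tb f1 f2 v0 n)).1 ∧
    (f1 (play tb f1 f2 v0 n)).1 ≤ B - (play tb f1 f2 v0 n).pay1 ∧
    G.E (play tb f1 f2 v0 n).cur (f1 (play tb f1 f2 v0 n)).2

/-- Player 2's strategy is legal w.r.t. the initial budget `B`. -/
def Legal2 {V : Type} [Fintype V] (G : BiddingGame V) (f2 : Strat V) (B : ℝ) : Prop :=
  ∀ (tb : TieBreak V) (f1 : Strat V) (v0 : V) (n : ℕ),
    0 ≤ (f2 (play tb f1 f2 v0 n)).1 ∧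
    (f2 (play tb f1 f2 v0 n)).1 ≤ B - (play tb f1 f2 v0 n).pay2 ∧
    G.E (play tb f1 f2 v0 n).cur (f2 (play tb f1 f2 v0 n)).2

/-- A memoryless strategy: its action depends only on the current vertex and the
player's current budget (equivalently, the net payments so far). -/
def Memoryless {V : Type} (f : Strat V) : Prop :=
  ∀ h h' : Hist V, h.cur = h'.cur → h.pay1 = h'.pay1 → f h = f h'

/-- A memoryless strategy in a mean-payoff game: its action depends only on the current
vertex, the player's current budget, and the current energy level. -/
def MemorylessE {V : Type} (w : V → ℤ) (f : Strat V) : Prop :=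
  ∀ h h' : Hist V, h.cur = h'.cur → h.pay1 = h'.pay1 →
    h.energyAll w = h'.energyAll w → f h = f h'

/-- A constant-memory strategy for Player 2 (Max): the action depends only on the current
vertex, Player 2's current budget, the current energy level, and a memory state ranging
over a finite set (of size independent of the history), updated round by round. -/
def FiniteMemory2 {V : Type} (w : V → ℤ) (f : Strat V) (B : ℝ) : Prop :=
  ∃ (M : Type) (_ : Fintype M) (m0 : M) (upd : M → BidRound V → M)
    (act : V → ℝ → ℤ → M → ℝ × V),
    ∀ h : Hist V, f h = act h.cur (B - h.pay2) (h.energyAll w) (h.rounds.foldl upd m0)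

/-- Strong connectivity of the arena. -/
def StronglyConnected {V : Type} [Fintype V] (G : BiddingGame V) : Prop :=
  ∀ v u : V, Relation.ReflTransGen G.E v u

/-! ### Richman games -/

/-- The successors of `v`. -/
noncomputable def BiddingGame.adj {V : Type} [Fintype V] (G : BiddingGame V) (v : V) :
    Finset V :=
  Finset.univ.filter (fun u => G.E v u)

lemma BiddingGame.adj_nonempty {V : Type} [Fintype V] (G : BiddingGame V) (v : V) :
    (G.adj v).Nonempty := by
  obtain ⟨u, hu⟩ := G.total v
  exact ⟨u, by simpa [BiddingGame.adj] using hu⟩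

/-- The Richman function `R(v, i)`. -/
noncomputable def Rfun {V : Type} [Fintype V] (G : BiddingGame V) (vR vS : V) :
    ℕ → V → ℝ
  | 0, v => if v = vR then 0 else 1
  | i + 1, v =>
      if v = vR then 0
      else if v = vS then 1
      else ((G.adj v).sup' (G.adj_nonempty v) (Rfun G vR vS i) +
            (G.adj v).inf' (G.adj_nonempty v) (Rfun G vR vS i)) / 2

/-- The limit Richman function `R(v) = lim_i R(v, i)`; since `i ↦ R(v, i)` is
nonincreasing, the limit equals the infimum. -/
noncomputable def Rlim {V : Type} [Fintype V] (G : BiddingGame V) (vR vS : V)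
    (v : V) : ℝ :=
  ⨅ i : ℕ, Rfun G vR vS i v

/-- Player 1 wins an outcome of a Richman game: `vR` is reached, and `vS` is not
reached before that (the game ends once a target is reached). -/
def Win1Richman {V : Type} (tb : TieBreak V) (f1 f2 : Strat V) (v0 vR vS : V) : Prop :=
  ∃ n, visit tb f1 f2 v0 n = vR ∧ ∀ m < n, visit tb f1 f2 v0 m ≠ vS

/-- Player 2 wins an outcome of a Richman game: `vS` is reached first, or no target is
ever reached. -/
def Win2Richman {V : Type} (tb : TieBreak V) (f1 f2 : Strat V) (v0 vR vS : V) : Prop :=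
  (∃ n, visit tb f1 f2 v0 n = vS ∧ ∀ m < n, visit tb f1 f2 v0 m ≠ vR) ∨
  (∀ n, visit tb f1 f2 v0 n ≠ vR ∧ visit tb f1 f2 v0 n ≠ vS)

/-- Player 1 has a winning strategy in the Richman game from `v0` with budget `B`. -/
def Win1RichmanFrom {V : Type} [Fintype V] (G : BiddingGame V) (vR vS v0 : V)
    (B : ℝ) : Prop :=
  ∀ tb : TieBreak V, ∃ f1 : Strat V, Legal1 G f1 B ∧
    ∀ f2 : Strat V, Legal2 G f2 (1 - B) → Win1Richman tb f1 f2 v0 vR vS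

/-- Player 2 has a winning strategy in the Richman game from `v0` with budget `B`. -/
def Win2RichmanFrom {V : Type} [Fintype V] (G : BiddingGame V) (vR vS v0 : V)
    (B : ℝ) : Prop :=
  ∀ tb : TieBreak V, ∃ f2 : Strat V, Legal2 G f2 B ∧
    ∀ f1 : Strat V, Legal1 G f1 (1 - B) → Win2Richman tb f1 f2 v0 vR vS

/-- `t` is a threshold budget at `v` in the Richman game. -/
def IsThreshRichman {V : Type} [Fintype V] (G : BiddingGame V) (vR vS v : V)
    (t : ℝ) : Prop :=
  (∀ B : ℝ, B ≤ 1 → t < B → Win1RichmanFrom G vR vS v B) ∧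
  (∀ B : ℝ, B ≤ 1 → 1 - t < B → Win2RichmanFrom G vR vS v B)

/-! ### Richman games with target sets -/

def Win1RichmanSet {V : Type} (tb : TieBreak V) (f1 f2 : Strat V) (v0 : V)
    (R S : Set V) : Prop :=
  ∃ n, visit tb f1 f2 v0 n ∈ R ∧ ∀ m < n, visit tb f1 f2 v0 m ∉ S

def Win2RichmanSet {V : Type} (tb : TieBreak V) (f1 f2 : Strat V) (v0 : V)
    (R S : Set V) : Prop :=
  (∃ n, visit tb f1 f2 v0 n ∈ S ∧ ∀ m < n, visit tb f1 f2 v0 m ∉ R) ∨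
  (∀ n, visit tb f1 f2 v0 n ∉ R ∧ visit tb f1 f2 v0 n ∉ S)

/-- `t` is a threshold budget at `v` in the Richman game with target sets `R` and `S`. -/
def IsThreshRichmanSet {V : Type} [Fintype V] (G : BiddingGame V) (R S : Set V)
    (v : V) (t : ℝ) : Prop :=
  (∀ B : ℝ, B ≤ 1 → t < B → ∀ tb : TieBreak V, ∃ f1 : Strat V, Legal1 G f1 B ∧
      ∀ f2 : Strat V, Legal2 G f2 (1 - B) → Win1RichmanSet tb f1 f2 v R S) ∧
  (∀ B : ℝ, B ≤ 1 → 1 - t < B → ∀ tb : TieBreak V, ∃ f2 : Strat V, Legal2 G f2 B ∧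
      ∀ f1 : Strat V, Legal1 G f1 (1 - B) → Win2RichmanSet tb f1 f2 v R S)

/-! ### Reachability games -/

/-- `t` is a threshold budget at `v` in the reachability game with target set `T`. -/
def IsThreshReach {V : Type} [Fintype V] (G : BiddingGame V) (T : Set V) (v : V)
    (t : ℝ) : Prop :=
  (∀ B : ℝ, B ≤ 1 → t < B → ∀ tb : TieBreak V, ∃ f1 : Strat V, Legal1 G f1 B ∧
      ∀ f2 : Strat V, Legal2 G f2 (1 - B) → ∃ n, visit tb f1 f2 v n ∈ T) ∧
  (∀ B : ℝ, B ≤ 1 → 1 - t < B → ∀ tb : TieBreak V, ∃ f2 : Strat V, Legal2 G f2 B ∧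
      ∀ f1 : Strat V, Legal1 G f1 (1 - B) → ∀ n, visit tb f1 f2 v n ∉ T)

/-! ### Parity games -/

/-- Player 1 wins an outcome of a parity game: the maximal parity index visited
infinitely often is odd. -/
def Win1Parity {V : Type} (p : V → ℕ) (tb : TieBreak V) (f1 f2 : Strat V)
    (v0 : V) : Prop :=
  Odd (sSup {k : ℕ | ∀ N : ℕ, ∃ n ≥ N, p (visit tb f1 f2 v0 n) = k})

def Win1ParityFrom {V : Type} [Fintype V] (G : BiddingGame V) (p : V → ℕ) (v0 : V)
    (B : ℝ) : Prop :=
  ∀ tb : TieBreak V, ∃ f1 : Strat V, Legal1 G f1 B ∧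
    ∀ f2 : Strat V, Legal2 G f2 (1 - B) → Win1Parity p tb f1 f2 v0

def Win2ParityFrom {V : Type} [Fintype V] (G : BiddingGame V) (p : V → ℕ) (v0 : V)
    (B : ℝ) : Prop :=
  ∀ tb : TieBreak V, ∃ f2 : Strat V, Legal2 G f2 B ∧
    ∀ f1 : Strat V, Legal1 G f1 (1 - B) → ¬ Win1Parity p tb f1 f2 v0

/-- `t` is a threshold budget at `v` in the parity game. -/
def IsThreshParity {V : Type} [Fintype V] (G : BiddingGame V) (p : V → ℕ) (v : V)
    (t : ℝ) : Prop :=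
  (∀ B : ℝ, B ≤ 1 → t < B → Win1ParityFrom G p v B) ∧
  (∀ B : ℝ, B ≤ 1 → 1 - t < B → Win2ParityFrom G p v B)

/-! ### Mean-payoff games (Min is Player 1, Max is Player 2) -/

/-- The mean-payoff value of the outcome. -/
noncomputable def mpval {V : Type} (w : V → ℤ) (tb : TieBreak V) (f1 f2 : Strat V)
    (v0 : V) : ℝ :=
  Filter.liminf (fun n : ℕ => (energy w tb f1 f2 v0 n : ℝ) / n) Filter.atTop

/-- Min can guarantee a nonpositive mean-payoff value from `v0` with budget `B`. -/
def MinWinsFrom {V : Type} [Fintype V] (G : BiddingGame V) (w : V → ℤ) (v0 : V)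
    (B : ℝ) : Prop :=
  ∀ tb : TieBreak V, ∃ f1 : Strat V, Legal1 G f1 B ∧
    ∀ f2 : Strat V, Legal2 G f2 (1 - B) → mpval w tb f1 f2 v0 ≤ 0

/-- Max can guarantee a strictly positive mean-payoff value from `v0` with budget `B`. -/
def MaxWinsFrom {V : Type} [Fintype V] (G : BiddingGame V) (w : V → ℤ) (v0 : V)
    (B : ℝ) : Prop :=
  ∀ tb : TieBreak V, ∃ f2 : Strat V, Legal2 G f2 B ∧
    ∀ f1 : Strat V, Legal1 G f1 (1 - B) → 0 < mpval w tb f1 f2 v0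

/-- `t` is a threshold budget at `v` in the mean-payoff game. -/
def IsThreshMP {V : Type} [Fintype V] (G : BiddingGame V) (w : V → ℤ) (v : V)
    (t : ℝ) : Prop :=
  (∀ B : ℝ, B ≤ 1 → t < B → MinWinsFrom G w v B) ∧
  (∀ B : ℝ, B ≤ 1 → 1 - t < B → MaxWinsFrom G w v B)

/-! ### The split graph `G^u` and the weighted Richman function -/

/-- Edges of `G^u`: `u` is split into `u_s = Sum.inl u` (keeping the outgoing edges of
`u`, with no incoming edges) and `u_t = Sum.inr ()` (receiving the edges into `u`, with
no outgoing edges). -/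
def splitE {V : Type} [Fintype V] (G : BiddingGame V) (u : V) :
    V ⊕ Unit → V ⊕ Unit → Prop
  | Sum.inl v, Sum.inl x => G.E v x ∧ x ≠ u
  | Sum.inl v, Sum.inr _ => G.E v u
  | Sum.inr _, _ => False

/-- The successors in `G^u` of a vertex `v ∈ V` (i.e. of `Sum.inl v`). -/
noncomputable def succu {V : Type} [Fintype V] (G : BiddingGame V) (u v : V) :
    Finset (V ⊕ Unit) :=
  Finset.univ.filter (fun y => splitE G u (Sum.inl v) y)

lemma succu_nonempty {V : Type} [Fintype V] (G : BiddingGame V) (u v : V) :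
    (succu G u v).Nonempty := by
  obtain ⟨x, hx⟩ := G.total v
  by_cases hxu : x = u
  · refine ⟨Sum.inr (), ?_⟩
    simp only [succu, Finset.mem_filter, Finset.mem_univ, true_and]
    exact show G.E v u from hxu ▸ hx
  · refine ⟨Sum.inl x, ?_⟩
    simp only [succu, Finset.mem_filter, Finset.mem_univ, true_and]
    exact show G.E v x ∧ x ≠ u from ⟨hx, hxu⟩

/-- `W(v⁺)`: the maximal value of `W` over the `G^u`-successors of `v`. -/
noncomputable def supWu {V : Type} [Fintype V] (G : BiddingGame V) (u : V)
    (W : V ⊕ Unit → ℝ) (v : V) : ℝ :=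
  (succu G u v).sup' (succu_nonempty G u v) W

/-- `W(v⁻)`: the minimal value of `W` over the `G^u`-successors of `v`. -/
noncomputable def infWu {V : Type} [Fintype V] (G : BiddingGame V) (u : V)
    (W : V ⊕ Unit → ℝ) (v : V) : ℝ :=
  (succu G u v).inf' (succu_nonempty G u v) W

/-- `W` is a weighted Richman function for the weights `w`, split at `u`:
`W(u_t) = 0` and `W(v) = (W(v⁺) + W(v⁻))/2 + w(v)` for every `v ∈ V`
(`Sum.inl v` represents `v`, in particular `Sum.inl u` is `u_s`). -/
def IsWRichman {V : Type} [Fintype V] (G : BiddingGame V) (w : V → ℝ) (u : V)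
    (W : V ⊕ Unit → ℝ) : Prop :=
  W (Sum.inr ()) = 0 ∧
  ∀ v : V, W (Sum.inl v) = (supWu G u W v + infWu G u W v) / 2 + w v

/-- Projection of `G^u`-vertices back to vertices of `G`. -/
def projU {V : Type} (u : V) : V ⊕ Unit → V := Sum.elim id (fun _ => u)

/-- `w_M`: the maximal absolute value of `W` over `V`. -/
noncomputable def wMax {V : Type} [Fintype V] (W : V ⊕ Unit → ℝ) (u : V) : ℝ :=
  Finset.univ.sup' ⟨u, Finset.mem_univ u⟩ (fun v : V => |W (Sum.inl v)|)

/-- `b_M`: the maximal value of the bid `(W(v⁺) − W(v⁻))/2` over `V`. -/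
noncomputable def bMax {V : Type} [Fintype V] (G : BiddingGame V) (u : V)
    (W : V ⊕ Unit → ℝ) : ℝ :=
  Finset.univ.sup' ⟨u, Finset.mem_univ u⟩
    (fun v : V => (supWu G u W v - infWu G u W v) / 2)

set_option linter.unusedSectionVars false

/-! ### Auxiliary development for Statement 3 -/

namespace Richman0Aux

variable {V : Type} [Fintype V]

/-- Reachability of `t` within `n` steps. -/
def reachN (E : V → V → Prop) (t : V) : ℕ → V → Prop
  | 0, v => v = t
  | n + 1, v => v = t ∨ ∃ u, E v u ∧ reachN E t n u

lemma reachN_of_rtg {E : V → V → Prop} {t v : V}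
    (h : Relation.ReflTransGen E v t) : ∃ n, reachN E t n v := by
  induction h using Relation.ReflTransGen.head_induction_on with
  | refl => exact ⟨0, rfl⟩
  | head hE _ ih =>
    obtain ⟨n, hn⟩ := ih
    exact ⟨n + 1, Or.inr ⟨_, hE, hn⟩⟩

/-- Distance to `t`. -/
noncomputable def dRk (E : V → V → Prop) (t v : V) : ℕ := sInf {n | reachN E t n v}

lemma dRk_spec {E : V → V → Prop} {t v : V} (h : Relation.ReflTransGen E v t) :
    reachN E t (dRk E t v) v :=
  Nat.sInf_mem (reachN_of_rtg h)

lemma eq_of_dRk_eq_zero {E : V → V → Prop} {t v : V}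
    (h : Relation.ReflTransGen E v t) (h0 : dRk E t v = 0) : v = t := by
  have := dRk_spec h
  rw [h0] at this
  exact this

lemma exists_dRk_lt {E : V → V → Prop} {t v : V}
    (h : Relation.ReflTransGen E v t) (hv : v ≠ t) :
    ∃ u, E v u ∧ dRk E t u < dRk E t v := by
  have hs := dRk_spec h
  rcases hn : dRk E t v with _ | m
  · rw [hn] at hs; exact absurd hs hv
  · rw [hn] at hs
    rcases hs with h' | ⟨u, hE, hu⟩
    · exact absurd h' hv
    · exact ⟨u, hE, lt_of_le_of_lt (Nat.sInf_le hu) (Nat.lt_succ_self m)⟩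

/-- A fixed successor choice: decreases the distance to `vR` whenever possible. -/
noncomputable def nxt (G : BiddingGame V) (vR : V) (v : V) : V :=
  if h : ∃ u, G.E v u ∧ dRk G.E vR u < dRk G.E vR v then h.choose
  else (G.total v).choose

lemma nxt_edge (G : BiddingGame V) (vR v : V) : G.E v (nxt G vR v) := by
  unfold nxt
  split
  · next h => exact h.choose_spec.1
  · exact (G.total v).choose_spec

lemma nxt_lt (G : BiddingGame V) (vR v : V)
    (h : Relation.ReflTransGen G.E v vR) (hv : v ≠ vR) :
    dRk G.E vR (nxt G vR v) < dRk G.E vR v := by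
  have hx := exists_dRk_lt h hv
  rw [nxt, dif_pos hx]
  exact hx.choose_spec.2

/-- Whether `vR` has been visited along the history. -/
def VisR (vR : V) (h : Hist V) : Prop := vR ∈ h.init :: h.rounds.map BidRound.dest

/-- The number of biddings lost by Player 1. -/
def nL (h : Hist V) : ℕ := (h.rounds.filter (fun r => !r.p1Won)).length

lemma cur_concat (h : Hist V) (r : BidRound V) :
    (Hist.mk h.init (h.rounds ++ [r])).cur = r.dest := by
  simp [Hist.cur]

lemma cur_mem (h : Hist V) : h.cur ∈ h.init :: h.rounds.map BidRound.dest := by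
  rcases h with ⟨i, l⟩
  rcases List.eq_nil_or_concat l with rfl | ⟨l', r, rfl⟩
  · simp [Hist.cur]
  · rw [List.concat_eq_append]
    simp [Hist.cur]

lemma pay1_concat (h : Hist V) (r : BidRound V) :
    (Hist.mk h.init (h.rounds ++ [r])).pay1
      = h.pay1 + (if r.p1Won then r.bid else -r.bid) := by
  rcases h with ⟨i, l⟩
  simp [Hist.pay1]

lemma nL_concat (h : Hist V) (r : BidRound V) :
    nL (Hist.mk h.init (h.rounds ++ [r])) = nL h + (if r.p1Won then 0 else 1) := by
  rcases h with ⟨i, l⟩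
  simp only [nL, List.filter_append]
  cases hr : r.p1Won <;> simp [hr]

lemma visR_concat (vR : V) (h : Hist V) (r : BidRound V) :
    VisR vR (Hist.mk h.init (h.rounds ++ [r])) ↔ VisR vR h ∨ r.dest = vR := by
  rcases h with ⟨i, l⟩
  simp only [VisR, List.map_append, List.map_cons, List.map_nil, List.mem_cons,
    List.mem_append, List.mem_singleton, eq_comm (b := vR)]
  tauto

lemma extend_eq (tb : TieBreak V) (f1 f2 : Strat V) (h : Hist V) :
    extend tb f1 f2 h = ⟨h.init, h.rounds ++ [⟨(f1 h).2, (f1 h).1, true⟩]⟩ ∨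
    (extend tb f1 f2 h = ⟨h.init, h.rounds ++ [⟨(f2 h).2, (f2 h).1, false⟩]⟩ ∧
      (f1 h).1 ≤ (f2 h).1) := by
  unfold extend
  split
  · exact Or.inl rfl
  · next hc =>
    push_neg at hc
    exact Or.inr ⟨rfl, hc.1⟩

/-- Player 1's strategy. -/
noncomputable def stratR (G : BiddingGame V) (vR : V) (ε : ℝ) (D : ℕ) : Strat V :=
  fun h =>
    (if VisR vR h then 0 else 2 * ε * 3 ^ (D - dRk G.E vR h.cur), nxt G vR h.cur)

section Main

variable (G : BiddingGame V) (vR : V) (ε : ℝ) (D : ℕ)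

lemma one_le_pow3 (k : ℕ) : (1:ℝ) ≤ 3 ^ k := one_le_pow₀ (by norm_num)

lemma invariant (hreach : ∀ u : V, Relation.ReflTransGen G.E u vR)
    (hε : 0 < ε) (hD : ∀ u : V, dRk G.E vR u ≤ D)
    (tb : TieBreak V) (f2 : Strat V) (v0 : V) (n : ℕ) :
    (play tb (stratR G vR ε D) f2 v0 n).pay1 ≤
      if VisR vR (play tb (stratR G vR ε D) f2 v0 n) then ε * (3 ^ D - 1)
      else ε * ((3:ℝ) ^ (D - dRk G.E vR (play tb (stratR G vR ε D) f2 v0 n).cur) - 1)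
        - ε * nL (play tb (stratR G vR ε D) f2 v0 n) := by
  set f1 := stratR G vR ε D with hf1
  induction n with
  | zero =>
    have h1 : (play tb f1 f2 v0 0).pay1 = 0 := by simp [play, Hist.pay1]
    have h2 : nL (play tb f1 f2 v0 0) = 0 := by simp [play, nL]
    rw [h1, h2]
    split
    · nlinarith [one_le_pow3 D, hε]
    · push_cast
      nlinarith [one_le_pow3 (D - dRk G.E vR (play tb f1 f2 v0 0).cur), hε]
  | succ n ih =>
    set h := play tb f1 f2 v0 n with hh
    have hplay : play tb f1 f2 v0 (n + 1) = extend tb f1 f2 h := rfl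
    have hbid : (f1 h).1
        = if VisR vR h then 0 else 2 * ε * 3 ^ (D - dRk G.E vR h.cur) := rfl
    have hmove : (f1 h).2 = nxt G vR h.cur := rfl
    have hnL0 : (0:ℝ) ≤ ε * nL h := by positivity
    rcases extend_eq tb f1 f2 h with hext | ⟨hext, hle⟩
    · -- Player 1 won the bidding
      have hpay : (play tb f1 f2 v0 (n + 1)).pay1 = h.pay1 + (f1 h).1 := by
        rw [hplay, hext, pay1_concat]; norm_num
      have hcur : (play tb f1 f2 v0 (n + 1)).cur = nxt G vR h.cur := by
        rw [hplay, hext, cur_concat, hmove]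
      have hnL : nL (play tb f1 f2 v0 (n + 1)) = nL h := by
        rw [hplay, hext, nL_concat]; norm_num
      have hvis : VisR vR (play tb f1 f2 v0 (n + 1)) ↔ VisR vR h ∨ (f1 h).2 = vR := by
        rw [hplay, hext]; exact visR_concat vR h _
      by_cases hV : VisR vR h
      · have hb0 : (f1 h).1 = 0 := by rw [hbid, if_pos hV]
        rw [if_pos (hvis.mpr (Or.inl hV)), hpay, hb0]
        rw [if_pos hV] at ih
        linarith
      · set d := dRk G.E vR h.cur with hd
        have hb0 : (f1 h).1 = 2 * ε * 3 ^ (D - d) := by rw [hbid, if_neg hV]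
        have hcurne : h.cur ≠ vR := by
          intro e
          exact hV (by rw [VisR, ← e]; exact cur_mem h)
        have hd1 : 1 ≤ d :=
          Nat.pos_of_ne_zero (fun e => hcurne (eq_of_dRk_eq_zero (hreach _) e))
        have hdD : d ≤ D := hD _
        have hd' : dRk G.E vR (nxt G vR h.cur) < d := nxt_lt G vR h.cur (hreach _) hcurne
        rw [if_neg hV] at ih
        have hps : (3:ℝ) ^ ((D - d) + 1) = 3 ^ (D - d) * 3 := pow_succ 3 _
        have key : h.pay1 + (f1 h).1 ≤ ε * ((3:ℝ) ^ ((D - d) + 1) - 1) - ε * nL h := by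
          rw [hb0, hps]; linarith
        by_cases hV' : VisR vR (play tb f1 f2 v0 (n + 1))
        · rw [if_pos hV', hpay]
          have hpow : (3:ℝ) ^ ((D - d) + 1) ≤ 3 ^ D :=
            pow_le_pow_right₀ (by norm_num) (by omega)
          have := mul_le_mul_of_nonneg_left hpow hε.le
          linarith
        · rw [if_neg hV', hpay, hcur, hnL]
          have hpow : (3:ℝ) ^ ((D - d) + 1) ≤ 3 ^ (D - dRk G.E vR (nxt G vR h.cur)) :=
            pow_le_pow_right₀ (by norm_num) (by omega)
          have := mul_le_mul_of_nonneg_left hpow hε.le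
          linarith
    · -- Player 2 won the bidding
      have hpay : (play tb f1 f2 v0 (n + 1)).pay1 = h.pay1 - (f2 h).1 := by
        rw [hplay, hext, pay1_concat]; norm_num [sub_eq_add_neg]
      have hnL : nL (play tb f1 f2 v0 (n + 1)) = nL h + 1 := by
        rw [hplay, hext, nL_concat]; norm_num
      have hvis : VisR vR (play tb f1 f2 v0 (n + 1)) ↔ VisR vR h ∨ (f2 h).2 = vR := by
        rw [hplay, hext]; exact visR_concat vR h _
      by_cases hV : VisR vR h
      · have hb0 : (f1 h).1 = 0 := by rw [hbid, if_pos hV]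
        rw [if_pos (hvis.mpr (Or.inl hV)), hpay]
        rw [if_pos hV] at ih
        rw [hb0] at hle
        linarith
      · set d := dRk G.E vR h.cur with hd
        have hb0 : (f1 h).1 = 2 * ε * 3 ^ (D - d) := by rw [hbid, if_neg hV]
        rw [if_neg hV] at ih
        rw [hb0] at hle
        have h1 : ε * 1 ≤ ε * 3 ^ (D - d) :=
          mul_le_mul_of_nonneg_left (one_le_pow3 _) hε.le
        by_cases hV' : VisR vR (play tb f1 f2 v0 (n + 1))
        · rw [if_pos hV', hpay]
          have h3 : ε * 1 ≤ ε * 3 ^ D := mul_le_mul_of_nonneg_left (one_le_pow3 _) hε.le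
          linarith
        · rw [if_neg hV', hpay, hnL]
          have h2 : ε * 1 ≤ ε * 3 ^ (D - dRk G.E vR (play tb f1 f2 v0 (n+1)).cur) :=
            mul_le_mul_of_nonneg_left (one_le_pow3 _) hε.le
          push_cast
          linarith

lemma legal1 (B : ℝ) (hreach : ∀ u : V, Relation.ReflTransGen G.E u vR)
    (hε : 0 < ε) (hεB : ε * 3 ^ D ≤ B) (hD : ∀ u : V, dRk G.E vR u ≤ D) :
    Legal1 G (stratR G vR ε D) B := by
  intro tb f2 v0 n
  have ih := invariant G vR ε D hreach hε hD tb f2 v0 n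
  set h := play tb (stratR G vR ε D) f2 v0 n with hh
  have hbid : (stratR G vR ε D h).1
      = if VisR vR h then 0 else 2 * ε * 3 ^ (D - dRk G.E vR h.cur) := rfl
  have hmove : (stratR G vR ε D h).2 = nxt G vR h.cur := rfl
  have hnL0 : (0:ℝ) ≤ ε * nL h := by positivity
  refine ⟨?_, ?_, ?_⟩
  · rw [hbid]
    split
    · exact le_refl 0
    · positivity
  · rw [hbid]
    by_cases hV : VisR vR h
    · rw [if_pos hV]
      rw [if_pos hV] at ih
      have he : ε * ((3:ℝ) ^ D - 1) = ε * 3 ^ D - ε := by ring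
      linarith
    · rw [if_neg hV]
      rw [if_neg hV] at ih
      set d := dRk G.E vR h.cur with hd
      have hcurne : h.cur ≠ vR := by
        intro e
        exact hV (by rw [VisR, ← e]; exact cur_mem h)
      have hd1 : 1 ≤ d :=
        Nat.pos_of_ne_zero (fun e => hcurne (eq_of_dRk_eq_zero (hreach _) e))
      have hdD : d ≤ D := hD _
      have hps : (3:ℝ) ^ ((D - d) + 1) = 3 ^ (D - d) * 3 := pow_succ 3 _
      have hpow : (3:ℝ) ^ ((D - d) + 1) ≤ 3 ^ D :=
        pow_le_pow_right₀ (by norm_num) (by omega)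
      have hmul := mul_le_mul_of_nonneg_left hpow hε.le
      rw [hps] at hmul
      have he1 : ε * ((3:ℝ) ^ (D - d) - 1) = ε * 3 ^ (D - d) - ε := by ring
      have he2 : ε * ((3:ℝ) ^ (D - d) * 3) = 3 * (ε * 3 ^ (D - d)) := by ring
      linarith
  · rw [hmove]
    exact nxt_edge G vR h.cur

end Main

end Richman0Aux


open Richman0Aux in
set_option maxHeartbeats 1000000 in
/-- In a Richman game in which `vR` is reachable from every vertex and
no vertex (other than `vS` itself) has a path to `vS`, the threshold budget of every
vertex is `0`: from every vertex and with every strictly positive initial budget,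
Player 1 can force the outcome to reach `vR`, and moreover to reach it while still
holding a strictly positive budget. -/
theorem richman_only_reachable_target_wins
    {V : Type} [Fintype V] (G : BiddingGame V) (vR vS : V) (hRS : vR ≠ vS)
    (hreach : ∀ v : V, Relation.ReflTransGen G.E v vR)
    (hunreach : ∀ v : V, Relation.ReflTransGen G.E v vS → v = vS)
    (v : V) (hv : v ≠ vS) (B : ℝ) (hB0 : 0 < B) (hB1 : B ≤ 1) (tb : TieBreak V) :
    ∃ f1 : Strat V, Legal1 G f1 B ∧
      ∀ f2 : Strat V, Legal2 G f2 (1 - B) →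
        ∃ n, visit tb f1 f2 v n = vR ∧ (∀ m < n, visit tb f1 f2 v m ≠ vS) ∧
          0 < B - (play tb f1 f2 v n).pay1 := by
  classical
  obtain ⟨D, hD⟩ : ∃ D : ℕ, ∀ u : V, dRk G.E vR u ≤ D :=
    ⟨Finset.univ.sup (dRk G.E vR), fun u => Finset.le_sup (Finset.mem_univ u)⟩
  set ε := B / (2 * 3 ^ D) with hεdef
  have h3D : (0:ℝ) < 3 ^ D := by positivity
  have hε : 0 < ε := div_pos hB0 (by positivity)
  have hεB' : ε * 3 ^ D = B / 2 := by
    rw [hεdef]; field_simp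
  have hεB : ε * 3 ^ D ≤ B := by linarith
  set f1 := stratR G vR ε D with hf1
  refine ⟨f1, legal1 G vR ε D B hreach hε hεB hD, ?_⟩
  intro f2 hf2
  have hplay : ∀ n : ℕ, play tb f1 f2 v (n + 1) = extend tb f1 f2 (play tb f1 f2 v n) :=
    fun n => rfl
  have hconcat : ∀ n : ℕ, ∃ r : BidRound V,
      play tb f1 f2 v (n + 1)
        = ⟨(play tb f1 f2 v n).init, (play tb f1 f2 v n).rounds ++ [r]⟩ := by
    intro n
    rcases extend_eq tb f1 f2 (play tb f1 f2 v n) with hext | ⟨hext, _⟩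
    · exact ⟨_, (hplay n).trans hext⟩
    · exact ⟨_, (hplay n).trans hext⟩
  -- every visited vertex is reachable from `v`
  have hreach2 : ∀ n : ℕ, Relation.ReflTransGen G.E v ((play tb f1 f2 v n).cur) := by
    intro n
    induction n with
    | zero => exact Relation.ReflTransGen.refl
    | succ n ih =>
      rcases extend_eq tb f1 f2 (play tb f1 f2 v n) with hext | ⟨hext, _⟩
      · have hc : (play tb f1 f2 v (n + 1)).cur = nxt G vR (play tb f1 f2 v n).cur := by
          rw [hplay n, hext, cur_concat]
          rfl
        rw [hc]
        exact ih.tail (nxt_edge G vR _)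
      · have hc : (play tb f1 f2 v (n + 1)).cur = (f2 (play tb f1 f2 v n)).2 := by
          rw [hplay n, hext, cur_concat]
        rw [hc]
        exact ih.tail (hf2 tb f1 v n).2.2
  have hnotS : ∀ m : ℕ, visit tb f1 f2 v m ≠ vS := by
    intro m hS
    exact hv (hunreach v (hS ▸ hreach2 m))
  -- Player 1's payment is bounded below thanks to Player 2's legality
  have hpayLB : ∀ n : ℕ, B - 1 ≤ (play tb f1 f2 v n).pay1 := by
    intro n
    obtain ⟨h0, h1, -⟩ := hf2 tb f1 v n
    rw [Hist.pay2] at h1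
    linarith
  -- the target is eventually visited
  have hex : ∃ n, VisR vR (play tb f1 f2 v n) := by
    by_contra hno
    push_neg at hno
    set K := Nat.ceil ((ε * 3 ^ D + 1) / ε) with hKdef
    have hnLK : ∀ n : ℕ, nL (play tb f1 f2 v n) ≤ K := by
      intro n
      have ih := invariant G vR ε D hreach hε hD tb f2 v n
      rw [← hf1, if_neg (hno n)] at ih
      have hpow : (3:ℝ) ^ (D - dRk G.E vR (play tb f1 f2 v n).cur) ≤ 3 ^ D :=
        pow_le_pow_right₀ (by norm_num) (Nat.sub_le D _)
      have hmul := mul_le_mul_of_nonneg_left hpow hε.le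
      have h1 := hpayLB n
      have he : ε * ((3:ℝ) ^ (D - dRk G.E vR (play tb f1 f2 v n).cur) - 1)
          = ε * 3 ^ (D - dRk G.E vR (play tb f1 f2 v n).cur) - ε := by ring
      have hcast : (nL (play tb f1 f2 v n) : ℝ) ≤ (ε * 3 ^ D + 1) / ε := by
        rw [le_div_iff₀ hε]
        nlinarith
      have : (nL (play tb f1 f2 v n) : ℝ) ≤ (K : ℝ) := hcast.trans (Nat.le_ceil _)
      exact_mod_cast this
    set μ : ℕ → ℤ := fun n =>
      (dRk G.E vR (play tb f1 f2 v n).cur : ℤ)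
        + (D + 1) * ((K : ℤ) - (nL (play tb f1 f2 v n) : ℤ)) with hμ
    have hμ0 : ∀ n, 0 ≤ μ n := by
      intro n
      have h1 : (nL (play tb f1 f2 v n) : ℤ) ≤ K := by exact_mod_cast hnLK n
      have h2 : (0:ℤ) ≤ ((D:ℤ) + 1) * ((K : ℤ) - (nL (play tb f1 f2 v n) : ℤ)) :=
        mul_nonneg (by positivity) (by omega)
      have h3 : (0:ℤ) ≤ (dRk G.E vR (play tb f1 f2 v n).cur : ℤ) := Int.ofNat_nonneg _
      simp only [hμ]
      linarith
    have hstep : ∀ n, μ (n + 1) ≤ μ n - 1 := by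
      intro n
      have hcurne : (play tb f1 f2 v n).cur ≠ vR := by
        intro e
        exact hno n (by rw [VisR, ← e]; exact cur_mem _)
      rcases extend_eq tb f1 f2 (play tb f1 f2 v n) with hext | ⟨hext, _⟩
      · have hc : (play tb f1 f2 v (n + 1)).cur = nxt G vR (play tb f1 f2 v n).cur := by
          rw [hplay n, hext, cur_concat]
          rfl
        have hl : nL (play tb f1 f2 v (n + 1)) = nL (play tb f1 f2 v n) := by
          rw [hplay n, hext, nL_concat]; norm_num
        have hd' := nxt_lt G vR _ (hreach (play tb f1 f2 v n).cur) hcurne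
        have hd'' : (dRk G.E vR (nxt G vR (play tb f1 f2 v n).cur) : ℤ)
            < (dRk G.E vR (play tb f1 f2 v n).cur : ℤ) := by exact_mod_cast hd'
        simp only [hμ, hc, hl]
        linarith
      · have hc : (play tb f1 f2 v (n + 1)).cur = (f2 (play tb f1 f2 v n)).2 := by
          rw [hplay n, hext, cur_concat]
        have hl : nL (play tb f1 f2 v (n + 1)) = nL (play tb f1 f2 v n) + 1 := by
          rw [hplay n, hext, nL_concat]; norm_num
        have hdD : (dRk G.E vR (f2 (play tb f1 f2 v n)).2 : ℤ) ≤ D := by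
          exact_mod_cast hD _
        have hd0 : (0:ℤ) ≤ (dRk G.E vR (play tb f1 f2 v n).cur : ℤ) := Int.ofNat_nonneg _
        simp only [hμ, hc, hl]
        push_cast
        ring_nf
        nlinarith [hdD, hd0]
    have hdesc : ∀ n : ℕ, μ n ≤ μ 0 - n := by
      intro n
      induction n with
      | zero => simp
      | succ n ih =>
        have := hstep n
        push_cast
        push_cast at ih
        linarith
    have h1 := hμ0 ((μ 0).toNat + 1)
    have h2 := hdesc ((μ 0).toNat + 1)
    have h3 := hμ0 0
    omega
  obtain ⟨n0, hn0, hmin⟩ : ∃ n, VisR vR (play tb f1 f2 v n)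
      ∧ ∀ m < n, ¬VisR vR (play tb f1 f2 v m) :=
    ⟨Nat.find hex, Nat.find_spec hex, fun m hm => Nat.find_min hex hm⟩
  have hvisit : visit tb f1 f2 v n0 = vR := by
    rcases n0 with _ | m
    · have : vR = v := by simpa [play, VisR] using hn0
      show (play tb f1 f2 v 0).cur = vR
      simp [play, Hist.cur, this]
    · obtain ⟨r, hext⟩ := hconcat m
      rw [hext, visR_concat] at hn0
      have hdest : r.dest = vR := hn0.resolve_left (hmin m (Nat.lt_succ_self m))
      show (play tb f1 f2 v (m + 1)).cur = vR
      rw [hext, cur_concat, hdest]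
  refine ⟨n0, hvisit, fun m _ => hnotS m, ?_⟩
  have ih := invariant G vR ε D hreach hε hD tb f2 v n0
  rw [← hf1, if_pos hn0] at ih
  have he : ε * ((3:ℝ) ^ D - 1) = ε * 3 ^ D - ε := by ring
  linarith
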